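/- arXiv:1404.2848 — 4 statements merged into one kernel-verified Lean document; each statement's English description precedes it below -/
import Mathlib

section
/- Let d ≥ 1 be a natural number. If d is odd, then M₂(ℝ) ⊗_ℝ ℍ^{⊗(d-1)} is isomorphic as an ℝ-algebra to M_{2^d}(ℝ); if d is even, then M₂(ℝ) ⊗_ℝ ℍ^{⊗(d-1)} is isomorphic as an ℝ-algebra to M_{2^{d-1}}(ℍ). -/
open scoped TensorProduct PiTensorProduct Quaternion

noncomputable instance quaternionPiTensorSemiring (n : ℕ) :
    Semiring (⨂[ℝ] _ : Fin n, Quaternion ℝ) := PiTensorProduct.instSemiring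

noncomputable instance quaternionPiTensorAlgebra (n : ℕ) :
    Algebra ℝ (⨂[ℝ] _ : Fin n, Quaternion ℝ) := PiTensorProduct.instAlgebra

noncomputable section QTQ

def rconj : Quaternion ℝ →ₐ[ℝ] Module.End ℝ (Quaternion ℝ) where
  toFun q := LinearMap.mulRight ℝ (star q)
  map_one' := by ext x <;> simp
  map_mul' p q := by ext x <;> simp [star_mul, mul_assoc]
  map_zero' := by ext x <;> simp
  map_add' p q := by ext x <;> simp [mul_add]
  commutes' r := by
    ext x <;> simp [Algebra.algebraMap_eq_smul_one]

def qphi : (Quaternion ℝ) ⊗[ℝ] (Quaternion ℝ) →ₐ[ℝ] Module.End ℝ (Quaternion ℝ) :=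
  Algebra.TensorProduct.lift (Algebra.lmul ℝ (Quaternion ℝ)) rconj (fun p q => by
    ext x <;> simp [rconj, mul_assoc])

@[simp] lemma qphi_tmul (p q x : Quaternion ℝ) :
    qphi (p ⊗ₜ[ℝ] q) x = p * x * star q := by
  simp [qphi, Algebra.TensorProduct.lift_tmul, rconj, mul_assoc]

/-- The quaternion basis `1, i, j, k`. -/
def qe : Fin 4 → Quaternion ℝ := ![1, ⟨0,1,0,0⟩, ⟨0,0,1,0⟩, ⟨0,0,0,1⟩]

/-- Character table of the Klein four-group. -/
def qchi : Fin 4 → Fin 4 → ℝ :=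
  ![![1,1,1,1], ![1,1,-1,-1], ![1,-1,1,-1], ![1,-1,-1,1]]

/-- Element of `ℍ ⊗ ℍ` mapping to the projection onto the `b`-th basis vector. -/
def pelt (b : Fin 4) : (Quaternion ℝ) ⊗[ℝ] (Quaternion ℝ) :=
  (4 : ℝ)⁻¹ • ∑ c : Fin 4, qchi c b • (qe c ⊗ₜ[ℝ] qe c)

set_option maxHeartbeats 1000000 in
lemma key1 (b m : Fin 4) : qphi (pelt b) (qe m) = if b = m then qe m else 0 := by
  have : qphi (pelt b) (qe m)
      = (4:ℝ)⁻¹ • ∑ c : Fin 4, qchi c b • (qe c * qe m * star (qe c)) := by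
    show qphi.toLinearMap (pelt b) (qe m) = _
    rw [pelt, map_smul, map_sum]
    simp [LinearMap.sum_apply]
  rw [this]
  fin_cases b <;> fin_cases m <;>
    simp [qchi, Fin.sum_univ_four] <;>
    ext <;>
    simp [Quaternion.re_mul, Quaternion.imI_mul, Quaternion.imJ_mul, Quaternion.imK_mul, Quaternion.re_smul, Quaternion.imI_smul, Quaternion.imJ_smul, Quaternion.imK_smul] <;>
    simp [qe, Quaternion.ext_iff, Matrix.vecHead, Matrix.vecTail] <;> norm_num


/-- Element of `ℍ ⊗ ℍ` mapping to the matrix unit `E a b`. -/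
def eelt (a b : Fin 4) : (Quaternion ℝ) ⊗[ℝ] (Quaternion ℝ) :=
  ((qe a * star (qe b)) ⊗ₜ[ℝ] (1 : Quaternion ℝ)) * pelt b

lemma star_qe_mul_self (b : Fin 4) : star (qe b) * qe b = 1 := by
  fin_cases b <;> ext <;> simp [Quaternion.re_mul, Quaternion.imI_mul, Quaternion.imJ_mul, Quaternion.imK_mul] <;> simp [qe, Quaternion.ext_iff] <;> norm_num

lemma key2 (a b m : Fin 4) : qphi (eelt a b) (qe m) = if b = m then qe a else 0 := by
  rw [eelt, map_mul, Module.End.mul_apply, key1]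
  split
  · subst m
    rw [qphi_tmul]
    simp [mul_assoc, star_qe_mul_self]
  · simp

lemma qdecomp (x : Quaternion ℝ) :
    x = x.re • qe 0 + x.imI • qe 1 + x.imJ • qe 2 + x.imK • qe 3 := by
  ext <;> simp [Quaternion.re_smul, Quaternion.imI_smul, Quaternion.imJ_smul, Quaternion.imK_smul] <;> simp [qe]

/-- coordinates -/
def qco (a : Fin 4) (x : Quaternion ℝ) : ℝ := ![x.re, x.imI, x.imJ, x.imK] a

lemma qphi_surjective : Function.Surjective qphi := by
  intro f
  refine ⟨∑ a : Fin 4, ∑ b : Fin 4, qco a (f (qe b)) • eelt a b, ?_⟩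
  have key : ∀ m : Fin 4,
      qphi (∑ a : Fin 4, ∑ b : Fin 4, qco a (f (qe b)) • eelt a b) (qe m) = f (qe m) := by
    intro m
    have : qphi (∑ a : Fin 4, ∑ b : Fin 4, qco a (f (qe b)) • eelt a b) (qe m)
        = ∑ a : Fin 4, ∑ b : Fin 4, qco a (f (qe b)) • (qphi (eelt a b) (qe m)) := by
      show qphi.toLinearMap _ (qe m) = _
      rw [map_sum]
      simp only [map_sum, map_smul, LinearMap.sum_apply, LinearMap.smul_apply]
      rfl
    rw [this]
    simp only [key2]
    simp only [Fin.sum_univ_four]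
    conv_rhs => rw [qdecomp (f (qe m))]
    fin_cases m <;> simp [qco] <;> abel
  refine LinearMap.ext fun x => ?_
  conv_lhs => rw [qdecomp x]
  conv_rhs => rw [qdecomp x]
  simp only [map_add, map_smul, key]

lemma qphi_bijective : Function.Bijective qphi := by
  have h : Module.finrank ℝ ((Quaternion ℝ) ⊗[ℝ] (Quaternion ℝ))
      = Module.finrank ℝ (Module.End ℝ (Quaternion ℝ)) := by
    rw [Module.finrank_tensorProduct, Module.finrank_linearMap, Quaternion.finrank_eq_four]
  exact ⟨(LinearMap.injective_iff_surjective_of_finrank_eq_finrank h).mpr qphi_surjective,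
    qphi_surjective⟩

/-- `ℍ ⊗ ℍ ≃ₐ M₄(ℝ)`. -/
def quatTensorQuat : (Quaternion ℝ) ⊗[ℝ] (Quaternion ℝ) ≃ₐ[ℝ] Matrix (Fin 4) (Fin 4) ℝ :=
  (AlgEquiv.ofBijective qphi qphi_bijective).trans
    (algEquivMatrix (QuaternionAlgebra.basisOneIJK _ _ _))

end QTQ

noncomputable section Peel

variable (R : Type*) [CommSemiring R] (A : Type*) [Semiring A] [Algebra R A] (n : ℕ)

/-- The multilinear map `(x₀, …, xₙ) ↦ x₀ ⊗ (x₁ ⊗ ⋯ ⊗ xₙ)`. -/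
def peelML : MultilinearMap R (fun _ : Fin (n+1) => A) (A ⊗[R] (⨂[R] _ : Fin n, A)) :=
  LinearMap.uncurryLeft
    { toFun := fun a => (TensorProduct.mk R A (⨂[R] _ : Fin n, A) a).compMultilinearMap
        (PiTensorProduct.tprod R)
      map_add' := fun a b => MultilinearMap.ext fun x => by
        simp [TensorProduct.add_tmul]
      map_smul' := fun c a => MultilinearMap.ext fun x => by
        simp [TensorProduct.smul_tmul'] }

@[simp] lemma peelML_apply (v : Fin (n+1) → A) :
    peelML R A n v = v 0 ⊗ₜ[R] PiTensorProduct.tprod R (Fin.tail v) := rfl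

lemma fin_cons_one : (Fin.cons (1:A) (1 : Fin n → A)) = (1 : Fin (n+1) → A) :=
  funext (Fin.cases rfl (fun _ => rfl))

/-- Forward algebra hom. -/
def peelF : (⨂[R] _ : Fin (n+1), A) →ₐ[R] A ⊗[R] (⨂[R] _ : Fin n, A) :=
  PiTensorProduct.liftAlgHom (peelML R A n)
    (by simp [Algebra.TensorProduct.one_def, PiTensorProduct.one_def]; rfl)
    (fun x y => by
      simp only [peelML_apply]
      have ht : Fin.tail (x * y) = Fin.tail x * Fin.tail y := rfl
      rw [ht, ← PiTensorProduct.tprod_mul_tprod, Algebra.TensorProduct.tmul_mul_tmul]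
      rfl)

@[simp] lemma peelF_tprod (x : Fin (n+1) → A) :
    peelF R A n (PiTensorProduct.tprod R x)
      = x 0 ⊗ₜ[R] PiTensorProduct.tprod R (Fin.tail x) := by
  simp [peelF]

/-- `(x₁, …, xₙ) ↦ 1 ⊗ x₁ ⊗ ⋯ ⊗ xₙ` as a multilinear map. -/
def peelGRML : MultilinearMap R (fun _ : Fin n => A) (⨂[R] _ : Fin (n+1), A) :=
  (PiTensorProduct.tprod R (s := fun _ : Fin (n+1) => A)).curryLeft 1

@[simp] lemma peelGRML_apply (x : Fin n → A) :
    peelGRML R A n x = PiTensorProduct.tprod R (Fin.cons 1 x) := rfl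

/-- Right inclusion algebra hom. -/
def peelGR : (⨂[R] _ : Fin n, A) →ₐ[R] (⨂[R] _ : Fin (n+1), A) :=
  PiTensorProduct.liftAlgHom (peelGRML R A n)
    (by rw [PiTensorProduct.one_def, peelGRML_apply, fin_cons_one])
    (fun x y => by
      simp only [peelGRML_apply]
      rw [PiTensorProduct.tprod_mul_tprod]
      congr 1
      exact funext (Fin.cases (by simp) (fun i => rfl)))

@[simp] lemma peelGR_tprod (x : Fin n → A) :
    peelGR R A n (PiTensorProduct.tprod R x) = PiTensorProduct.tprod R (Fin.cons 1 x) := by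
  simp [peelGR]

lemma mulSingle_zero_mul_cons (a : A) (x : Fin n → A) :
    (MonoidHom.mulSingle (fun _ : Fin (n+1) => A) 0 a) * (Fin.cons 1 x) = Fin.cons a x := by
  refine funext (Fin.cases ?_ fun i => ?_)
  · simp
  · simp [Pi.mulSingle, Function.update, Fin.succ_ne_zero]

lemma cons_mul_mulSingle_zero (a : A) (x : Fin n → A) :
    (Fin.cons 1 x) * (MonoidHom.mulSingle (fun _ : Fin (n+1) => A) 0 a) = Fin.cons a x := by
  refine funext (Fin.cases ?_ fun i => ?_)
  · simp
  · simp [Pi.mulSingle, Function.update, Fin.succ_ne_zero]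

/-- Backward algebra hom. -/
def peelG : A ⊗[R] (⨂[R] _ : Fin n, A) →ₐ[R] (⨂[R] _ : Fin (n+1), A) :=
  Algebra.TensorProduct.lift
    (PiTensorProduct.singleAlgHom (R := R) (A := fun _ : Fin (n+1) => A) 0) (peelGR R A n)
    (fun a t => by
      induction t using PiTensorProduct.induction_on with
      | smul_tprod r x =>
        rw [map_smul]
        refine Commute.smul_right ?_ r
        rw [peelGR_tprod]
        unfold Commute SemiconjBy
        rw [PiTensorProduct.singleAlgHom_apply (R := R) (A := fun _ : Fin (n+1) => A),
          PiTensorProduct.tprod_mul_tprod,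
          PiTensorProduct.tprod_mul_tprod, mulSingle_zero_mul_cons, cons_mul_mulSingle_zero]
      | add x y hx hy =>
        rw [map_add]
        exact Commute.add_right hx hy)


lemma mulSingle_apply_zero (a : A) :
    MonoidHom.mulSingle (fun _ : Fin (n+1) => A) 0 a 0 = a := by simp

lemma tail_mulSingle_zero (a : A) :
    Fin.tail (MonoidHom.mulSingle (fun _ : Fin (n+1) => A) 0 a) = 1 :=
  funext fun j => by
    simp [Fin.tail, MonoidHom.mulSingle_apply, Pi.mulSingle, Function.update,
      Fin.succ_ne_zero]

lemma cons_one_mulSingle (j : Fin n) (x : A) :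
    Fin.cons (1:A) (MonoidHom.mulSingle (fun _ : Fin n => A) j x)
      = MonoidHom.mulSingle (fun _ : Fin (n+1) => A) j.succ x := by
  refine funext (Fin.cases ?_ fun i => ?_)
  · simp [MonoidHom.mulSingle_apply, Pi.mulSingle, Function.update,
      (Fin.succ_ne_zero j).symm]
  · simp [MonoidHom.mulSingle_apply, Pi.mulSingle, Function.update, Fin.succ_inj]

lemma tail_mulSingle_succ (j : Fin n) (x : A) :
    Fin.tail (MonoidHom.mulSingle (fun _ : Fin (n+1) => A) j.succ x)
      = MonoidHom.mulSingle (fun _ : Fin n => A) j x :=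
  funext fun i => by
    simp [Fin.tail, MonoidHom.mulSingle_apply, Pi.mulSingle, Function.update, Fin.succ_inj]

lemma mulSingle_succ_zero (j : Fin n) (x : A) :
    MonoidHom.mulSingle (fun _ : Fin (n+1) => A) j.succ x 0 = 1 := by
  simp [MonoidHom.mulSingle_apply, Pi.mulSingle, Function.update,
    (Fin.succ_ne_zero j).symm]

/-- Peeling off the first factor of an `(n+1)`-fold tensor power, as an algebra
equivalence. -/
def peelEquiv : (⨂[R] _ : Fin (n+1), A) ≃ₐ[R] A ⊗[R] (⨂[R] _ : Fin n, A) := by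
  refine AlgEquiv.ofAlgHom (peelF R A n) (peelG R A n) ?_ ?_
  · refine Algebra.TensorProduct.ext ?_ ?_
    · refine AlgHom.ext fun a => ?_
      simp only [AlgHom.comp_apply, Algebra.TensorProduct.includeLeft_apply, AlgHom.id_apply]
      rw [peelG, Algebra.TensorProduct.lift_tmul, map_one, mul_one,
        PiTensorProduct.singleAlgHom_apply (R := R) (A := fun _ : Fin (n+1) => A),
        peelF_tprod, mulSingle_apply_zero, tail_mulSingle_zero,
        ← PiTensorProduct.one_def]
    · refine PiTensorProduct.algHom_ext fun i => ?_
      refine AlgHom.ext fun x => ?_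
      simp only [AlgHom.comp_apply, AlgHom.restrictScalars_apply, AlgHom.id_apply,
        Algebra.TensorProduct.includeRight_apply,
        PiTensorProduct.singleAlgHom_apply (R := R) (A := fun _ : Fin n => A)]
      rw [peelG, Algebra.TensorProduct.lift_tmul, map_one, one_mul, peelGR_tprod,
        cons_one_mulSingle, peelF_tprod, mulSingle_succ_zero, tail_mulSingle_succ]
  · refine PiTensorProduct.algHom_ext fun i => ?_
    refine AlgHom.ext fun x => ?_
    simp only [AlgHom.comp_apply, AlgHom.id_apply,
      PiTensorProduct.singleAlgHom_apply (R := R) (A := fun _ : Fin (n+1) => A)]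
    induction i using Fin.cases with
    | zero =>
      rw [peelF_tprod, mulSingle_apply_zero, tail_mulSingle_zero,
        peelG, Algebra.TensorProduct.lift_tmul, peelGR_tprod, fin_cons_one,
        ← PiTensorProduct.one_def, mul_one,
        PiTensorProduct.singleAlgHom_apply (R := R) (A := fun _ : Fin (n+1) => A)]
    | succ j =>
      rw [peelF_tprod, mulSingle_succ_zero, tail_mulSingle_succ,
        peelG, Algebra.TensorProduct.lift_tmul, map_one, one_mul, peelGR_tprod,
        cons_one_mulSingle]

end Peel

noncomputable section Assembly

/-- The empty tensor power is `ℝ`. -/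
def piEmptyEquiv : (⨂[ℝ] _ : Fin 0, Quaternion ℝ) ≃ₐ[ℝ] ℝ := by
  refine AlgEquiv.ofLinearEquiv (PiTensorProduct.isEmptyEquiv (Fin 0)) ?_ ?_
  · rw [PiTensorProduct.one_def, PiTensorProduct.isEmptyEquiv_apply_tprod]
  · have hs : ∀ z : (⨂[ℝ] _ : Fin 0, Quaternion ℝ),
        z = (PiTensorProduct.isEmptyEquiv (Fin 0) z) • PiTensorProduct.tprod ℝ 1 := by
      intro z
      induction z using PiTensorProduct.induction_on with
      | smul_tprod r f =>
        have hf : f = 1 := funext fun i => Fin.elim0 i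
        subst hf
        rw [LinearEquiv.map_smul, PiTensorProduct.isEmptyEquiv_apply_tprod,
          smul_eq_mul, mul_one]
      | add x y hx hy =>
        rw [LinearEquiv.map_add, add_smul, ← hx, ← hy]
    intro x y
    conv_lhs => rw [hs x, hs y]
    rw [smul_mul_assoc, mul_smul_comm, PiTensorProduct.tprod_mul_tprod]
    simp only [map_smul, PiTensorProduct.isEmptyEquiv_apply_tprod, one_mul, smul_eq_mul,
      mul_one]

/-- `A ≃ₐ[ℝ] M₁(A)`. -/
def oneByOne (A : Type*) [Semiring A] [Algebra ℝ A] : A ≃ₐ[ℝ] Matrix (Fin 1) (Fin 1) A where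
  toFun a := Matrix.diagonal fun _ => a
  invFun M := M 0 0
  left_inv a := by simp
  right_inv M := by
    ext i j
    fin_cases i <;> fin_cases j <;> simp
  map_mul' a b := by rw [Matrix.diagonal_mul_diagonal]
  map_add' a b := by rw [Matrix.diagonal_add]
  commutes' r := by
    ext i j
    fin_cases i <;> fin_cases j <;> simp [Matrix.algebraMap_matrix_apply]

/-- Kronecker product as algebra equivalence on real matrix algebras. -/
def kron (p q : ℕ) : (Matrix (Fin p) (Fin p) ℝ) ⊗[ℝ] (Matrix (Fin q) (Fin q) ℝ)
    ≃ₐ[ℝ] Matrix (Fin (p*q)) (Fin (p*q)) ℝ :=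
  (matrixEquivTensor (Fin q) ℝ (Matrix (Fin p) (Fin p) ℝ)).symm.trans
    ((Matrix.compAlgEquiv (Fin q) (Fin p) ℝ ℝ).trans
      (Matrix.reindexAlgEquiv ℝ ℝ (finProdFinEquiv.trans (finCongr (mul_comm q p)))))

/-- `ℍ ⊗ Mₘ(ℝ) ≃ₐ Mₘ(ℍ)`. -/
def quatMat (m : ℕ) : (Quaternion ℝ) ⊗[ℝ] Matrix (Fin m) (Fin m) ℝ
    ≃ₐ[ℝ] Matrix (Fin m) (Fin m) (Quaternion ℝ) :=
  (matrixEquivTensor (Fin m) ℝ (Quaternion ℝ)).symm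

end Assembly

noncomputable section Induction

lemma evenIso (k : ℕ) : Nonempty ((⨂[ℝ] _ : Fin (2*k), Quaternion ℝ) ≃ₐ[ℝ]
    Matrix (Fin (2^(2*k))) (Fin (2^(2*k))) ℝ) := by
  induction k with
  | zero =>
    exact ⟨piEmptyEquiv.trans ((oneByOne ℝ).trans
      (Matrix.reindexAlgEquiv ℝ ℝ (finCongr (by norm_num))))⟩
  | succ k ih =>
    obtain ⟨e⟩ := ih
    refine ⟨?_⟩
    have e1 : (⨂[ℝ] _ : Fin (2*(k+1)), Quaternion ℝ) ≃ₐ[ℝ]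
        (Quaternion ℝ) ⊗[ℝ] (⨂[ℝ] _ : Fin (2*k+1), Quaternion ℝ) :=
      peelEquiv ℝ (Quaternion ℝ) (2*k+1)
    refine e1.trans ?_
    refine (Algebra.TensorProduct.congr AlgEquiv.refl
      (peelEquiv ℝ (Quaternion ℝ) (2*k))).trans ?_
    refine (Algebra.TensorProduct.congr AlgEquiv.refl
      (Algebra.TensorProduct.congr AlgEquiv.refl e)).trans ?_
    refine ((Algebra.TensorProduct.assoc ℝ ℝ ℝ _ _ _).symm).trans ?_
    refine (Algebra.TensorProduct.congr quatTensorQuat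
      (AlgEquiv.refl : Matrix (Fin (2^(2*k))) (Fin (2^(2*k))) ℝ ≃ₐ[ℝ] _)).trans ?_
    refine (kron 4 (2^(2*k))).trans ?_
    exact Matrix.reindexAlgEquiv ℝ ℝ
      (finCongr (by rw [show 2*(k+1) = 2*k+2 by ring, pow_add]; ring))

lemma oddIso (k : ℕ) : Nonempty ((⨂[ℝ] _ : Fin (2*k+1), Quaternion ℝ) ≃ₐ[ℝ]
    Matrix (Fin (2^(2*k))) (Fin (2^(2*k))) (Quaternion ℝ)) := by
  obtain ⟨e⟩ := evenIso k
  exact ⟨(peelEquiv ℝ (Quaternion ℝ) (2*k)).trans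
    ((Algebra.TensorProduct.congr AlgEquiv.refl e).trans (quatMat (2^(2*k))))⟩

end Induction

/-- For `d ≥ 1`: if `d` is odd, then `M₂(ℝ) ⊗ℝ ℍ^{⊗(d-1)}` is isomorphic as an `ℝ`-algebra
to `M_{2^d}(ℝ)`; if `d` is even, it is isomorphic to `M_{2^{d-1}}(ℍ)`. -/
theorem matrix_tensor_quaternion_power_iso (d : ℕ) (hd : 1 ≤ d) :
    (Odd d → Nonempty ((Matrix (Fin 2) (Fin 2) ℝ) ⊗[ℝ] (⨂[ℝ] _ : Fin (d - 1), Quaternion ℝ)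
      ≃ₐ[ℝ] Matrix (Fin (2 ^ d)) (Fin (2 ^ d)) ℝ)) ∧
    (Even d → Nonempty ((Matrix (Fin 2) (Fin 2) ℝ) ⊗[ℝ] (⨂[ℝ] _ : Fin (d - 1), Quaternion ℝ)
      ≃ₐ[ℝ] Matrix (Fin (2 ^ (d - 1))) (Fin (2 ^ (d - 1))) (Quaternion ℝ))) := by
  obtain ⟨n, rfl⟩ : ∃ n, d = n + 1 := ⟨d - 1, (Nat.succ_pred_eq_of_pos hd).symm⟩
  constructor
  · intro hodd
    have hn : Even n := by
      rcases hodd with ⟨k, hk⟩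
      exact ⟨k, by omega⟩
    obtain ⟨k, hk⟩ := hn
    have hk2 : n = 2 * k := by omega
    subst hk2
    obtain ⟨e⟩ := evenIso k
    refine ⟨?_⟩
    refine (Algebra.TensorProduct.congr AlgEquiv.refl e).trans ?_
    refine (kron 2 (2^(2*k))).trans ?_
    exact Matrix.reindexAlgEquiv ℝ ℝ (finCongr (by rw [pow_succ]; ring))
  · intro heven
    have hn : Odd n := by
      rcases heven with ⟨k, hk⟩
      exact ⟨k-1, by omega⟩
    obtain ⟨k, hk⟩ := hn
    subst hk
    obtain ⟨e⟩ := oddIso k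
    refine ⟨?_⟩
    refine (Algebra.TensorProduct.congr AlgEquiv.refl e).trans ?_
    refine (Algebra.TensorProduct.congr AlgEquiv.refl (quatMat (2^(2*k))).symm).trans ?_
    refine ((Algebra.TensorProduct.assoc ℝ ℝ ℝ _ _ _).symm).trans ?_
    refine (Algebra.TensorProduct.congr (Algebra.TensorProduct.comm ℝ _ _)
      AlgEquiv.refl).trans ?_
    refine (Algebra.TensorProduct.assoc ℝ ℝ ℝ _ _ _).trans ?_
    refine (Algebra.TensorProduct.congr AlgEquiv.refl (kron 2 (2^(2*k)))).trans ?_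
    refine (quatMat (2*2^(2*k))).trans ?_
    exact Matrix.reindexAlgEquiv ℝ (Quaternion ℝ)
      (finCongr (show 2*2^(2*k) = 2^(2*k+1) by rw [pow_succ]; ring))
end

section
/- Let τ be a point of the upper half-plane 𝓗. Then for all α, β ∈ M_{g×2}(ℝ), E(α · J_τ, β · J_τ) = E(α, β); that is, E is compatible with the complex structure J_τ. -/
open Matrix

/-- The standard symplectic `2×2` matrix `J₂ = [[0,1],[-1,0]]`. -/
def J2 : Matrix (Fin 2) (Fin 2) ℝ := !![0, 1; -1, 0]

/-- The bilinear form `E(α,β) = tr(αᵀ S β J₂)` on the space of real `g×2` matrices. -/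
def Eform (g : ℕ) (S : Matrix (Fin g) (Fin g) ℝ) (α β : Matrix (Fin g) (Fin 2) ℝ) : ℝ :=
  (αᵀ * S * β * J2).trace

/-- For `τ` in the upper half-plane, `J_τ = (1/Im τ) • [[-Re τ, |τ|²], [-1, Re τ]]`. -/
noncomputable def Jmat (τ : ℂ) : Matrix (Fin 2) (Fin 2) ℝ :=
  (τ.im)⁻¹ • !![-τ.re, Complex.normSq τ; -1, τ.re]

/-- The crucial identity `J_τ · J₂ · J_τᵀ = J₂` (a reflection of `det J_τ = 1`). -/
lemma Jmat_mul_J2_mul_transpose (τ : ℂ) (hτ : 0 < τ.im) :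
    Jmat τ * J2 * (Jmat τ)ᵀ = J2 := by
  have h : τ.im ≠ 0 := ne_of_gt hτ
  have ht : (Jmat τ)ᵀ = (τ.im)⁻¹ • !![-τ.re, -1; Complex.normSq τ, τ.re] := by
    ext i j; fin_cases i <;> fin_cases j <;> simp [Jmat]
  rw [ht]
  ext i j
  set_option linter.unnecessarySeqFocus false in
  fin_cases i <;> fin_cases j <;>
    simp [Jmat, J2, Matrix.mul_apply, Fin.sum_univ_two, Complex.normSq_apply] <;>
    field_simp <;> ring

/-- `E` is compatible with the complex structure `J_τ`:
`E(α · J_τ, β · J_τ) = E(α, β)`. -/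
theorem Eform_compatible_Jmat (g : ℕ) (hg : 1 ≤ g) (S : Matrix (Fin g) (Fin g) ℝ)
    (τ : ℂ) (hτ : 0 < τ.im) :
    ∀ α β : Matrix (Fin g) (Fin 2) ℝ,
      Eform g S (α * Jmat τ) (β * Jmat τ) = Eform g S α β := by
  intro α β
  unfold Eform
  have h1 : (α * Jmat τ)ᵀ * S * (β * Jmat τ) * J2
      = (Jmat τ)ᵀ * (αᵀ * S * β * (Jmat τ * J2)) := by
    rw [Matrix.transpose_mul]
    simp only [Matrix.mul_assoc]
  rw [h1, Matrix.trace_mul_comm]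
  rw [show αᵀ * S * β * (Jmat τ * J2) * (Jmat τ)ᵀ
      = αᵀ * S * β * (Jmat τ * J2 * (Jmat τ)ᵀ) by simp only [Matrix.mul_assoc]]
  rw [Jmat_mul_J2_mul_transpose τ hτ]
end

section
/- Suppose S is symmetric and positive definite and let τ be a point of the upper half-plane 𝓗. Then the bilinear form H on M_{g×2}(ℝ) defined by H(α, β) = E(α, β · J_τ⁻¹) is symmetric and positive definite: H(α, β) = H(β, α) for all α, β, and H(α, α) > 0 for every α ≠ 0. (In particular, for τ = i one has H(α, α) = tr(αᵀ S α).) -/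
open Matrix

lemma Jmat_inv (τ : ℂ) (hτ : τ.im ≠ 0) :
    (Jmat τ)⁻¹ = (τ.im)⁻¹ • !![τ.re, -Complex.normSq τ; 1, -τ.re] := by
  apply Matrix.inv_eq_right_inv
  have h : Complex.normSq τ = τ.re * τ.re + τ.im * τ.im := Complex.normSq_apply τ
  ext i j
  fin_cases i <;> fin_cases j <;>
    simp [Jmat, Matrix.mul_apply, Fin.sum_univ_two, h] <;> field_simp <;> ring

lemma Kmat_eq (τ : ℂ) (hτ : τ.im ≠ 0) :
    (Jmat τ)⁻¹ * J2 = (τ.im)⁻¹ • !![Complex.normSq τ, τ.re; τ.re, 1] := by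
  rw [Jmat_inv τ hτ]
  ext i j
  fin_cases i <;> fin_cases j <;>
    simp [J2, Matrix.mul_apply, Fin.sum_univ_two]

lemma trace_mul_K (A : Matrix (Fin 2) (Fin 2) ℝ) (c n r : ℝ) :
    (A * (c • !![n, r; r, 1])).trace
      = c * (n * A 0 0 + r * A 0 1 + r * A 1 0 + A 1 1) := by
  simp [Matrix.trace_fin_two, Matrix.mul_apply, Fin.sum_univ_two]
  ring

lemma entry_eq (g : ℕ) (S : Matrix (Fin g) (Fin g) ℝ) (α : Matrix (Fin g) (Fin 2) ℝ)
    (i j : Fin 2) :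
    (αᵀ * S * α) i j = (fun k => α k i) ⬝ᵥ S *ᵥ (fun k => α k j) := by
  simp [Matrix.mul_apply, dotProduct, Matrix.mulVec, Finset.sum_mul, Finset.mul_sum]
  rw [Finset.sum_comm]
  exact Finset.sum_congr rfl fun k _ => Finset.sum_congr rfl fun l _ => by ring

lemma bilin_expand (g : ℕ) (S : Matrix (Fin g) (Fin g) ℝ) (u v : Fin g → ℝ) (r : ℝ) :
    (r • u + v) ⬝ᵥ S *ᵥ (r • u + v)
      = r * r * (u ⬝ᵥ S *ᵥ u) + r * (u ⬝ᵥ S *ᵥ v) + r * (v ⬝ᵥ S *ᵥ u) + v ⬝ᵥ S *ᵥ v := by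
  simp [Matrix.mulVec_add, Matrix.mulVec_smul, dotProduct_add, add_dotProduct,
    smul_dotProduct, dotProduct_smul, smul_eq_mul]
  ring

/-- If `S` is symmetric positive definite and `τ` lies in the upper half-plane, then
`H(α, β) = E(α, β · J_τ⁻¹)` is a symmetric positive definite bilinear form on `M_{g×2}(ℝ)`;
for `τ = i` one has `H(α, α) = tr(αᵀ S α)`. -/
theorem Eform_Jmat_posDef (g : ℕ) (hg : 1 ≤ g) (S : Matrix (Fin g) (Fin g) ℝ)
    (hS : S.PosDef) (τ : ℂ) (hτ : 0 < τ.im) :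
    (∀ α β : Matrix (Fin g) (Fin 2) ℝ,
      Eform g S α (β * (Jmat τ)⁻¹) = Eform g S β (α * (Jmat τ)⁻¹)) ∧
    (∀ α : Matrix (Fin g) (Fin 2) ℝ, α ≠ 0 → 0 < Eform g S α (α * (Jmat τ)⁻¹)) ∧
    (∀ α : Matrix (Fin g) (Fin 2) ℝ,
      Eform g S α (α * (Jmat Complex.I)⁻¹) = (αᵀ * S * α).trace) := by
  have him : τ.im ≠ 0 := ne_of_gt hτ
  have hSt : Sᵀ = S := by simpa using hS.1.eq
  have hE : ∀ α β : Matrix (Fin g) (Fin 2) ℝ,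
      Eform g S α (β * (Jmat τ)⁻¹) = (αᵀ * S * β * ((Jmat τ)⁻¹ * J2)).trace := by
    intro α β; simp [Eform, Matrix.mul_assoc]
  refine ⟨?_, ?_, ?_⟩
  · -- symmetry
    intro α β
    rw [hE, hE, Kmat_eq τ him]
    set K : Matrix (Fin 2) (Fin 2) ℝ :=
      (τ.im)⁻¹ • !![Complex.normSq τ, τ.re; τ.re, 1] with hKdef
    have hKs : Kᵀ = K := by
      ext i j; fin_cases i <;> fin_cases j <;> simp [hKdef]
    conv_lhs => rw [← Matrix.trace_transpose]
    simp only [Matrix.transpose_mul, Matrix.transpose_transpose, hSt, hKs]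
    rw [Matrix.trace_mul_comm]
    simp [Matrix.mul_assoc]
  · -- positivity
    intro α hα
    rw [hE, Kmat_eq τ him, trace_mul_K, entry_eq, entry_eq, entry_eq, entry_eq]
    set c0 : Fin g → ℝ := fun k => α k 0 with hc0
    set c1 : Fin g → ℝ := fun k => α k 1 with hc1
    have hsum : Complex.normSq τ * (c0 ⬝ᵥ S *ᵥ c0) + τ.re * (c0 ⬝ᵥ S *ᵥ c1)
        + τ.re * (c1 ⬝ᵥ S *ᵥ c0) + c1 ⬝ᵥ S *ᵥ c1
        = ((τ.re • c0 + c1) ⬝ᵥ S *ᵥ (τ.re • c0 + c1))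
          + τ.im * τ.im * (c0 ⬝ᵥ S *ᵥ c0) := by
      rw [bilin_expand, Complex.normSq_apply]; ring
    rw [hsum]
    have hpos : ∀ x : Fin g → ℝ, x ≠ 0 → 0 < x ⬝ᵥ S *ᵥ x := by
      intro x hx; simpa using hS.dotProduct_mulVec_pos hx
    have hnn : ∀ x : Fin g → ℝ, 0 ≤ x ⬝ᵥ S *ᵥ x := by
      intro x; simpa using hS.posSemidef.dotProduct_mulVec_nonneg x
    apply mul_pos (inv_pos.2 hτ)
    by_cases hc : c0 = 0
    · have hc1ne : c1 ≠ 0 := by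
        intro h1
        apply hα
        ext k i
        fin_cases i
        · exact congrFun hc k
        · exact congrFun h1 k
      have hv : τ.re • c0 + c1 = c1 := by rw [hc]; simp
      rw [hv, hc]
      simpa using hpos c1 hc1ne
    · exact add_pos_of_nonneg_of_pos (hnn _) (mul_pos (mul_pos hτ hτ) (hpos c0 hc))
  · -- τ = i
    intro α
    have hI : (Jmat Complex.I)⁻¹ * J2 = 1 := by
      rw [Kmat_eq Complex.I (by simp)]
      ext i j
      fin_cases i <;> fin_cases j <;>
        simp [Complex.normSq_apply, Matrix.one_apply]
    have : Eform g S α (α * (Jmat Complex.I)⁻¹)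
        = (αᵀ * S * α * ((Jmat Complex.I)⁻¹ * J2)).trace := by
      simp [Eform, Matrix.mul_assoc]
    rw [this, hI, Matrix.mul_one]
end

section
/- The quaternion algebra ℍ[ℚ; 2, -3] over the rationals — the 4-dimensional ℚ-algebra with basis 1, i, j, ij satisfying i² = 2, j² = -3 and ij = -ji — is a division ring. -/
open scoped Quaternion

lemma zmod3_sq : ∀ x y : ZMod 3, x ^ 2 = 2 * y ^ 2 → x = 0 ∧ y = 0 := by decide

lemma int_descent : ∀ n : ℕ, ∀ a b c d : ℤ,
    a.natAbs + b.natAbs + c.natAbs + d.natAbs ≤ n →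
    a ^ 2 - 2 * b ^ 2 + 3 * c ^ 2 - 6 * d ^ 2 = 0 →
    a = 0 ∧ b = 0 ∧ c = 0 ∧ d = 0 := by
  intro n
  induction n using Nat.strong_induction_on with
  | _ n ih =>
    intro a b c d hle h
    have h30 : (3 : ZMod 3) = 0 := rfl
    have h60 : (6 : ZMod 3) = 0 := rfl
    have h3 : ((a : ZMod 3)) ^ 2 = 2 * (b : ZMod 3) ^ 2 := by
      have := congrArg (Int.cast : ℤ → ZMod 3) h
      push_cast at this
      rw [h30, h60] at this
      linear_combination this
    obtain ⟨ha0, hb0⟩ := zmod3_sq _ _ h3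
    obtain ⟨a', rfl⟩ := (ZMod.intCast_zmod_eq_zero_iff_dvd a 3).mp ha0
    obtain ⟨b', rfl⟩ := (ZMod.intCast_zmod_eq_zero_iff_dvd b 3).mp hb0
    have h2 : 3 * (c ^ 2 - 2 * d ^ 2 + 3 * a' ^ 2 - 6 * b' ^ 2) = 0 := by
      push_cast at h ⊢
      linear_combination h
    have h2' : c ^ 2 - 2 * d ^ 2 + 3 * a' ^ 2 - 6 * b' ^ 2 = 0 :=
      (mul_eq_zero.mp h2).resolve_left (by norm_num)
    have h3' : ((c : ZMod 3)) ^ 2 = 2 * (d : ZMod 3) ^ 2 := by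
      have := congrArg (Int.cast : ℤ → ZMod 3) h2'
      push_cast at this
      rw [h30, h60] at this
      linear_combination this
    obtain ⟨c', rfl⟩ := (ZMod.intCast_zmod_eq_zero_iff_dvd c 3).mp
      (zmod3_sq _ _ h3').1
    obtain ⟨d', rfl⟩ := (ZMod.intCast_zmod_eq_zero_iff_dvd d 3).mp
      (zmod3_sq _ _ h3').2
    have h4 : 9 * (a' ^ 2 - 2 * b' ^ 2 + 3 * c' ^ 2 - 6 * d' ^ 2) = 0 := by
      push_cast at h ⊢
      linear_combination h
    have h4' : a' ^ 2 - 2 * b' ^ 2 + 3 * c' ^ 2 - 6 * d' ^ 2 = 0 :=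
      (mul_eq_zero.mp h4).resolve_left (by norm_num)
    simp only [Int.natAbs_mul] at hle
    norm_num at hle
    rcases Nat.eq_zero_or_pos (a'.natAbs + b'.natAbs + c'.natAbs + d'.natAbs) with hz | hp
    · have e1 : a' = 0 := by omega
      have e2 : b' = 0 := by omega
      have e3 : c' = 0 := by omega
      have e4 : d' = 0 := by omega
      subst e1; subst e2; subst e3; subst e4
      norm_num
    · have hlt : a'.natAbs + b'.natAbs + c'.natAbs + d'.natAbs < n := by omega
      obtain ⟨e1, e2, e3, e4⟩ := ih _ hlt a' b' c' d' le_rfl h4'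
      subst e1; subst e2; subst e3; subst e4
      norm_num

lemma rat_anisotropic (a b c d : ℚ)
    (h : a ^ 2 - 2 * b ^ 2 + 3 * c ^ 2 - 6 * d ^ 2 = 0) :
    a = 0 ∧ b = 0 ∧ c = 0 ∧ d = 0 := by
  have hda : ((a.den : ℚ)) ≠ 0 := by exact_mod_cast a.den_nz
  have hdb : ((b.den : ℚ)) ≠ 0 := by exact_mod_cast b.den_nz
  have hdc : ((c.den : ℚ)) ≠ 0 := by exact_mod_cast c.den_nz
  have hdd : ((d.den : ℚ)) ≠ 0 := by exact_mod_cast d.den_nz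
  have ha : (a.num : ℚ) = a * a.den := (div_eq_iff hda).mp (Rat.num_div_den a)
  have hb : (b.num : ℚ) = b * b.den := (div_eq_iff hdb).mp (Rat.num_div_den b)
  have hc : (c.num : ℚ) = c * c.den := (div_eq_iff hdc).mp (Rat.num_div_den c)
  have hd : (d.num : ℚ) = d * d.den := (div_eq_iff hdd).mp (Rat.num_div_den d)
  set A : ℤ := a.num * (b.den * c.den * d.den) with hA
  set B : ℤ := b.num * (a.den * c.den * d.den) with hB
  set C : ℤ := c.num * (a.den * b.den * d.den) with hC
  set D : ℤ := d.num * (a.den * b.den * c.den) with hD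
  have keyQ : ((A : ℚ)) ^ 2 - 2 * (B : ℚ) ^ 2 + 3 * (C : ℚ) ^ 2 - 6 * (D : ℚ) ^ 2 = 0 := by
    have : ((A : ℚ)) ^ 2 - 2 * (B : ℚ) ^ 2 + 3 * (C : ℚ) ^ 2 - 6 * (D : ℚ) ^ 2 =
        (a ^ 2 - 2 * b ^ 2 + 3 * c ^ 2 - 6 * d ^ 2) *
          ((a.den : ℚ) * b.den * c.den * d.den) ^ 2 := by
      rw [hA, hB, hC, hD]; push_cast [ha, hb, hc, hd]; ring
    rw [this, h, zero_mul]
  have keyZ : A ^ 2 - 2 * B ^ 2 + 3 * C ^ 2 - 6 * D ^ 2 = 0 := by exact_mod_cast keyQ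
  obtain ⟨eA, eB, eC, eD⟩ := int_descent _ A B C D le_rfl keyZ
  have hden1 : (b.den * c.den * d.den : ℤ) ≠ 0 := by positivity
  have hden2 : (a.den * c.den * d.den : ℤ) ≠ 0 := by positivity
  have hden3 : (a.den * b.den * d.den : ℤ) ≠ 0 := by positivity
  have hden4 : (a.den * b.den * c.den : ℤ) ≠ 0 := by positivity
  exact ⟨Rat.num_eq_zero.mp ((mul_eq_zero.mp eA).resolve_right hden1),
    Rat.num_eq_zero.mp ((mul_eq_zero.mp eB).resolve_right hden2),
    Rat.num_eq_zero.mp ((mul_eq_zero.mp eC).resolve_right hden3),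
    Rat.num_eq_zero.mp ((mul_eq_zero.mp eD).resolve_right hden4)⟩

/-- The quaternion algebra `ℍ[ℚ; 2, -3]` (with `i² = 2`, `j² = -3`, `ij = -ji`) is a
division ring: every nonzero element is invertible. -/
theorem quaternionAlgebra_two_negThree_isDivisionRing :
    ∀ x : ℍ[ℚ, 2, -3], x ≠ 0 → IsUnit x := by
  intro x hx
  set n : ℚ := (x * star x).re with hn
  have hnval : n = x.re ^ 2 - 2 * x.imI ^ 2 + 3 * x.imJ ^ 2 - 6 * x.imK ^ 2 := by
    simp only [hn, QuaternionAlgebra.re_mul, QuaternionAlgebra.re_star,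
      QuaternionAlgebra.imI_star, QuaternionAlgebra.imJ_star, QuaternionAlgebra.imK_star]
    ring
  have hn0 : n ≠ 0 := by
    intro h0
    obtain ⟨e1, e2, e3, e4⟩ := rat_anisotropic x.re x.imI x.imJ x.imK (by rw [← hnval]; exact h0)
    exact hx (by ext <;> simp [e1, e2, e3, e4])
  have hmul : x * star x = (n : ℍ[ℚ, 2, -3]) := QuaternionAlgebra.mul_star_eq_coe x
  have hre' : (star x * x).re = n := by
    simp only [QuaternionAlgebra.re_mul, QuaternionAlgebra.re_star,
      QuaternionAlgebra.imI_star, QuaternionAlgebra.imJ_star, QuaternionAlgebra.imK_star, hnval]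
    ring
  have hmul' : star x * x = (n : ℍ[ℚ, 2, -3]) := by
    rw [QuaternionAlgebra.star_mul_eq_coe x, hre']
  refine ⟨⟨x, n⁻¹ • star x, ?_, ?_⟩, rfl⟩
  · rw [mul_smul_comm, hmul, ← QuaternionAlgebra.coe_smul, smul_eq_mul,
      inv_mul_cancel₀ hn0, QuaternionAlgebra.coe_one]
  · rw [smul_mul_assoc, hmul', ← QuaternionAlgebra.coe_smul, smul_eq_mul,
      inv_mul_cancel₀ hn0, QuaternionAlgebra.coe_one]
end
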